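/- With G, F, ∞⃗, x_R as above, the iteration of G on ∞⃗ reaches a fixed point in at most |S| steps, and at the fixed point, G^{|S|}(∞⃗)(s) = MinInitCons_M(s) = MinReach^+_{M,R}(s) for every state s, the minimal initial resource level with which a strategy can surely reach a reload state in at least one step. -/

import Mathlib

open scoped Classical NNReal ENat

noncomputable section

/-- A consumption Markov decision process. -/
structure CMDP (S A : Type) [Fintype S] where
  Δ : S → A → S → NNReal
  Δ_sum : ∀ s a, (∑ t, Δ s a t) = 1
  C : S → A → ℕ
  R : Set S
  cap : ℕ

namespace CMDP

variable {S A : Type} [Fintype S]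

/-- Strategies map histories (initial state, list of action/state steps) to actions. -/
abbrev Strat (S A : Type) : Type := S × List (A × S) → A

/-- Last state of a history. -/
def lastState (s : S) : List (A × S) → S
  | [] => s
  | (_, t) :: rest => lastState t rest

/-- The `i`-th state (0-indexed) of a history. -/
def stateAt (s : S) (steps : List (A × S)) (i : ℕ) : S :=
  (s :: steps.map Prod.snd).getD i s

variable (M : CMDP S A)

def Succ (s : S) (a : A) : Set S := {t | 0 < M.Δ s a t}

/-- Total consumption along a finite path. -/
def consAux : S → List (A × S) → ℕ
  | _, [] => 0
  | s, (a, t) :: rest => M.C s a + consAux t rest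

/-- One step of the energy-level update. -/
def levelStep (s : S) (a : A) (l : ℕ) : Option ℕ :=
  if s ∈ M.R then (if M.C s a ≤ M.cap then some (M.cap - M.C s a) else none)
  else (if M.C s a ≤ l then some (l - M.C s a) else none)

def energyFrom : Option ℕ → S → List (A × S) → Option ℕ
  | none, _, _ => none
  | some l, _, [] => some l
  | some l, s, (a, t) :: rest => energyFrom (M.levelStep s a l) t rest

/-- Energy level of a history initialized by `d` (`none` = ⊥, exhaustion). -/
def energy (d : ℕ) (s : S) (steps : List (A × S)) : Option ℕ :=
  M.energyFrom (some d) s steps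

/-- Validity of a finite path. -/
def ValidPath : S → List (A × S) → Prop
  | _, [] => True
  | s, (a, t) :: rest => t ∈ M.Succ s a ∧ ValidPath t rest

/-- First state of a run. -/
def runState (ρ : ℕ → S × A) (i : ℕ) : S := (ρ i).1

/-- The finite prefix of a run with `i` steps. -/
def prefixSteps (ρ : ℕ → S × A) (i : ℕ) : List (A × S) :=
  (List.range i).map fun k => ((ρ k).2, (ρ (k + 1)).1)

def IsRun (ρ : ℕ → S × A) : Prop := ∀ i, (ρ (i + 1)).1 ∈ M.Succ (ρ i).1 (ρ i).2

/-- A run is `d`-safe if the energy level of every finite prefix is defined. -/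
def DSafe (d : ℕ) (ρ : ℕ → S × A) : Prop :=
  ∀ i, M.energy d (runState ρ 0) (prefixSteps ρ i) ≠ none

/-- A run is compatible with a strategy. -/
def Compat (σ : Strat S A) (ρ : ℕ → S × A) : Prop :=
  M.IsRun ρ ∧ ∀ i, (ρ i).2 = σ (runState ρ 0, prefixSteps ρ i)

def CompatFrom (σ : Strat S A) (s : S) (ρ : ℕ → S × A) : Prop :=
  M.Compat σ ρ ∧ runState ρ 0 = s

/-- A strategy is `d`-safe in `s` if all compatible runs from `s` are `d`-safe. -/
def SafeStrat (σ : Strat S A) (d : ℕ) (s : S) : Prop :=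
  ∀ ρ, M.CompatFrom σ s ρ → M.DSafe d ρ

/-- A finite history compatible with a strategy. -/
def CompatHist (σ : Strat S A) (s : S) (steps : List (A × S)) : Prop :=
  M.ValidPath s steps ∧
    ∀ (i : ℕ) (h : i < steps.length), (steps.get ⟨i, h⟩).1 = σ (s, steps.take i)

def Memoryless (σ : Strat S A) : Prop :=
  ∀ h₁ h₂ : S × List (A × S), lastState h₁.1 h₁.2 = lastState h₂.1 h₂.2 → σ h₁ = σ h₂

/-- Cost of a run up to the first visit of `T` (∞ if `T` is never visited). -/
def reachCost (T : Set S) (ρ : ℕ → S × A) : ℕ∞ :=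
  ⨅ i ∈ {i : ℕ | runState ρ i ∈ T}, (M.consAux (runState ρ 0) (prefixSteps ρ i) : ℕ∞)

/-- `i`-step bounded reachability cost. -/
def reachCostBdd (T : Set S) (n : ℕ) (ρ : ℕ → S × A) : ℕ∞ :=
  ⨅ i ∈ {i : ℕ | i ≤ n ∧ runState ρ i ∈ T}, (M.consAux (runState ρ 0) (prefixSteps ρ i) : ℕ∞)

/-- Reachability cost requiring at least one step. -/
def reachCostPlus (T : Set S) (ρ : ℕ → S × A) : ℕ∞ :=
  ⨅ i ∈ {i : ℕ | 1 ≤ i ∧ runState ρ i ∈ T}, (M.consAux (runState ρ 0) (prefixSteps ρ i) : ℕ∞)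

def reachCostStrat (T : Set S) (σ : Strat S A) (s : S) : ℕ∞ :=
  ⨆ ρ ∈ {ρ | M.CompatFrom σ s ρ}, M.reachCost T ρ

def minReach (T : Set S) (s : S) : ℕ∞ :=
  ⨅ σ : Strat S A, M.reachCostStrat T σ s

def minReachBdd (T : Set S) (n : ℕ) (s : S) : ℕ∞ :=
  ⨅ σ : Strat S A, ⨆ ρ ∈ {ρ | M.CompatFrom σ s ρ}, M.reachCostBdd T n ρ

def minReachPlus (T : Set S) (s : S) : ℕ∞ :=
  ⨅ σ : Strat S A, ⨆ ρ ∈ {ρ | M.CompatFrom σ s ρ}, M.reachCostPlus T ρ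

/-- The Bellman operator for minimum cost reachability of `T`. -/
def bellman (T : Set S) (v : S → ℕ∞) : S → ℕ∞ := fun s =>
  if s ∈ T then 0 else ⨅ a : A, ((M.C s a : ℕ∞) + ⨆ t ∈ M.Succ s a, v t)

/-- The initial vector: `0` on `T`, `∞` elsewhere. -/
def xTvec (T : Set S) : S → ℕ∞ := fun s => if s ∈ T then 0 else ⊤

/-- Length of the longest simple path of `M`. -/
def longestSimple : ℕ :=
  sSup {n | ∃ (s : S) (steps : List (A × S)),
    M.ValidPath s steps ∧ (s :: steps.map Prod.snd).Nodup ∧ steps.length = n}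

/-- The augmented CMDP `M̃` with a fresh non-reload copy of every state. -/
def augment : CMDP (S ⊕ S) A where
  Δ := fun x a t =>
    Sum.elim (fun u => M.Δ (Sum.elim id id x) a u) (fun _ => (0 : NNReal)) t
  Δ_sum := by
    intro x a
    rw [Fintype.sum_sum_type]
    simp [M.Δ_sum (Sum.elim id id x) a]
  C := fun x a => M.C (Sum.elim id id x) a
  R := Sum.inl '' M.R
  cap := M.cap

/-- Truncation to `0` on reload states. -/
def strunc (x : S → ℕ∞) : S → ℕ∞ := fun s => if s ∈ M.R then 0 else x s

/-- The truncated Bellman-like operator `G`. -/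
def opG (v : S → ℕ∞) : S → ℕ∞ := fun s =>
  ⨅ a : A, ((M.C s a : ℕ∞) + ⨆ t ∈ M.Succ s a, M.strunc v t)

/-- Minimal `d ≤ cap` such that some strategy is `d`-safe in `s` (∞ if none). -/
def safeVec (s : S) : ℕ∞ :=
  ⨅ d ∈ {d : ℕ | d ≤ M.cap ∧ ∃ σ : Strat S A, M.SafeStrat σ d s}, (d : ℕ∞)

/-- An action safe in a state. -/
def SafeAction (s : S) (a : A) : Prop :=
  (s ∉ M.R ∧ ((M.C s a : ℕ∞) + ⨆ t ∈ M.Succ s a, M.safeVec t) ≤ M.safeVec s) ∨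
  (s ∈ M.R ∧ ((M.C s a : ℕ∞) + ⨆ t ∈ M.Succ s a, M.safeVec t) ≤ (M.cap : ℕ∞))

/-- A CMDP is decreasing if every (valid) simple cycle has positive consumption. -/
def Decreasing : Prop :=
  ∀ (s : S) (steps : List (A × S)), M.ValidPath s steps → steps ≠ [] →
    lastState s steps = s → (s :: (steps.map Prod.snd).dropLast).Nodup →
    0 < M.consAux s steps

/-- Selection according to a selection rule: the action of the largest
element of the domain below the counter value. -/
def selectFrom (φ : ℕ → Option A) (m : ℕ) (a₀ : A) : A :=
  (((List.range (m + 1)).reverse).findSome? φ).getD a₀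

/-- The finite counter strategy `Σ^y` induced by a counter selector. -/
def counterStrategy (sel : S → ℕ → Option A) (y : S → ℕ) (a₀ : A) : Strat S A :=
  fun h =>
    match M.energy (y h.1) h.1 h.2 with
    | some m => selectFrom (sel (lastState h.1 h.2)) m a₀
    | none => a₀

/-- The `SPR` value of an action. -/
def spr (s : S) (a : A) (x : S → ℕ∞) : ℕ∞ :=
  (M.C s a : ℕ∞) +
    ⨅ t ∈ M.Succ s a, max (x t) (⨆ t' ∈ {t' ∈ M.Succ s a | t' ≠ t}, M.safeVec t')

def opA (T : Set S) (x : S → ℕ∞) : S → ℕ∞ := fun s =>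
  if s ∈ T then M.safeVec s else ⨅ a : A, M.spr s a x

/-- Two-sided truncation. -/
def trunc2 (x : S → ℕ∞) : S → ℕ∞ := fun s =>
  if (M.cap : ℕ∞) < x s then ⊤ else if s ∈ M.R then 0 else x s

def opB (T : Set S) (x : S → ℕ∞) : S → ℕ∞ := M.trunc2 (M.opA T x)

def yTvec (T : Set S) : S → ℕ∞ := fun s => if s ∈ T then M.safeVec s else ⊤

def VisitsWithin (T : Set S) (i : ℕ) (ρ : ℕ → S × A) : Prop :=
  ∃ j ≤ i, runState ρ j ∈ T

def Visits (T : Set S) (ρ : ℕ → S × A) : Prop := ∃ j, runState ρ j ∈ T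

/-- Minimal `ℓ ≤ cap` s.t. some `ℓ`-safe strategy from `s` has a run visiting `T`
within the first `i` steps. -/
def safePRBdd (T : Set S) (i : ℕ) (s : S) : ℕ∞ :=
  ⨅ ℓ ∈ {ℓ : ℕ | ℓ ≤ M.cap ∧ ∃ σ : Strat S A, M.SafeStrat σ ℓ s ∧
      ∃ ρ, M.CompatFrom σ s ρ ∧ VisitsWithin T i ρ}, (ℓ : ℕ∞)

/-- Minimal `ℓ ≤ cap` s.t. some `ℓ`-safe strategy from `s` has a run visiting `T`. -/
def safePR (T : Set S) (s : S) : ℕ∞ :=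
  ⨅ ℓ ∈ {ℓ : ℕ | ℓ ≤ M.cap ∧ ∃ σ : Strat S A, M.SafeStrat σ ℓ s ∧
      ∃ ρ, M.CompatFrom σ s ρ ∧ Visits T ρ}, (ℓ : ℕ∞)

/-- Replace the set of reload states. -/
def setReload (R' : Set S) : CMDP S A := { M with R := R' }

/-- Probability of a finite continuation of a history under a strategy. -/
def pathProbAux (σ : Strat S A) : S × List (A × S) → List (A × S) → NNReal
  | _, [] => 1
  | h, (a, t) :: rest =>
      (if σ h = a then M.Δ (lastState h.1 h.2) a t else 0) *
        pathProbAux σ (h.1, h.2 ++ [(a, t)]) rest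

/-- Probability that the length-`n` prefix of a run from `s` under `σ`
satisfies the predicate `P`. -/
def probEvent [Fintype A] (σ : Strat S A) (s : S) (n : ℕ) (P : List (A × S) → Prop) : NNReal :=
  ∑ f : Fin n → A × S,
    if P (List.ofFn f) then M.pathProbAux σ (s, []) (List.ofFn f) else 0

/-- Number of visits of `T` along a finite path. -/
def visitCount (T : Set S) (s : S) (steps : List (A × S)) : ℕ :=
  (s :: steps.map Prod.snd).countP (fun x => decide (x ∈ T))

/-- `T` is visited infinitely often with probability one under `σ` from `s`. -/
def buchiAS [Fintype A] (σ : Strat S A) (s : S) (T : Set S) : Prop :=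
  ∀ k : ℕ,
    (⨆ n : ℕ, M.probEvent σ s n (fun steps => k ≤ visitCount T s steps)) = 1

/-- Minimal `d ≤ cap` s.t. some strategy is `d`-safe in `s` and visits `T`
infinitely often almost surely. -/
def safeBuchiVec [Fintype A] (T : Set S) (s : S) : ℕ∞ :=
  ⨅ d ∈ {d : ℕ | d ≤ M.cap ∧ ∃ σ : Strat S A, M.SafeStrat σ d s ∧ M.buchiAS σ s T}, (d : ℕ∞)

/-- Iterated memory update of a memory structure. -/
def updStar {Mem : Type} (upd : Mem → S → A → S → Mem) : Mem → S → List (A × S) → Mem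
  | m, _, [] => m
  | m, s, (a, t) :: rest => updStar upd (upd m s a t) t rest

/-- Finite-memory strategies: encodable by a finite memory structure. -/
def FinMemStrategy (σ : Strat S A) : Prop :=
  ∃ (Mem : Type) (_ : Finite Mem) (init : S → Mem) (upd : Mem → S → A → S → Mem)
    (nxt : Mem → S → A),
    ∀ h : S × List (A × S), σ h = nxt (updStar upd (init h.1) h.1 h.2) (lastState h.1 h.2)

/-- The joint run `α ⊙ ρ`. -/
def jointRun (s : S) (steps : List (A × S)) (ρ : ℕ → S × A) : ℕ → S × A :=
  fun i => if h : i < steps.length then (stateAt s steps i, (steps.get ⟨i, h⟩).1)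
           else ρ (i - steps.length)

end CMDP

namespace CMDPAux
open CMDP

lemma enat_iInf_attained {ι : Sort _} [Nonempty ι] (f : ι → ℕ∞) : ∃ i, f i = ⨅ j, f j := by
  obtain ⟨m, ⟨n, rfl⟩, hmin⟩ := (IsWellFounded.wf (r := ((· < ·) : ℕ∞ → ℕ∞ → Prop))).has_min
    (Set.range f) (Set.range_nonempty f)
  exact ⟨n, le_antisymm (le_iInf fun k => not_lt.1 (hmin _ ⟨k, rfl⟩)) (iInf_le _ _)⟩

variable {S A : Type} [Fintype S] (M : CMDP S A)

/-- The value iteration sequence. -/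
def V (n : ℕ) : S → ℕ∞ := (M.opG)^[n] ⊤

/-- Its pointwise limit. -/
def U : S → ℕ∞ := fun s => ⨅ n, V M n s

lemma V_zero (s : S) : V M 0 s = ⊤ := rfl

lemma V_succ (n : ℕ) : V M (n + 1) = M.opG (V M n) :=
  Function.iterate_succ_apply' M.opG n ⊤

lemma strunc_mono {v w : S → ℕ∞} (h : ∀ s, v s ≤ w s) (s : S) : M.strunc v s ≤ M.strunc w s := by
  unfold CMDP.strunc; split_ifs with hs
  · exact le_rfl
  · exact h s

lemma opG_mono {v w : S → ℕ∞} (h : ∀ s, v s ≤ w s) (s : S) : M.opG v s ≤ M.opG w s := by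
  unfold CMDP.opG
  refine iInf_mono fun a => add_le_add_right ?_ _
  exact iSup₂_mono fun t _ => strunc_mono M h t

lemma V_succ_le (n : ℕ) (s : S) : V M (n + 1) s ≤ V M n s := by
  induction n generalizing s with
  | zero => exact le_top
  | succ n ih =>
      calc V M (n + 1 + 1) s = M.opG (V M (n + 1)) s := by rw [V_succ]
      _ ≤ M.opG (V M n) s := opG_mono M (fun t => ih t) s
      _ = V M (n + 1) s := by rw [V_succ]

lemma V_antitone {m n : ℕ} (h : m ≤ n) (s : S) : V M n s ≤ V M m s := by
  induction n with
  | zero => simp_all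
  | succ n ih =>
      rcases Nat.lt_or_ge m (n + 1) with h' | h'
      · exact le_trans (V_succ_le M n s) (ih (by omega))
      · have : m = n + 1 := by omega
        subst this; exact le_rfl

lemma U_le_V (n : ℕ) (s : S) : U M s ≤ V M n s := iInf_le _ n

lemma exists_rank (s : S) : ∃ n, V M n s = U M s := enat_iInf_attained _

/-- The first iteration at which `s` attains its limit value. -/
def rank (s : S) : ℕ := Nat.find (exists_rank M s)

lemma V_rank (s : S) : V M (rank M s) s = U M s := Nat.find_spec (exists_rank M s)

lemma V_eq_U_of_rank_le {n : ℕ} {s : S} (h : rank M s ≤ n) : V M n s = U M s :=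
  le_antisymm (le_trans (V_antitone M h s) (V_rank M s).le) (U_le_V M n s)

/-- A uniform bound on all ranks. -/
def NN : ℕ := Finset.univ.sup (rank M)

lemma rank_le_NN (s : S) : rank M s ≤ NN M := Finset.le_sup (Finset.mem_univ s)

lemma opG_U : M.opG (U M) = U M := by
  funext s
  have h1 : M.opG (U M) s ≤ U M s := by
    have := opG_mono M (fun t => U_le_V M (NN M) t) s
    refine le_trans this ?_
    rw [← V_succ]
    exact le_trans (V_succ_le M _ s) (V_eq_U_of_rank_le M (rank_le_NN M s)).le
  have h2 : U M s ≤ M.opG (U M) s := by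
    have hV : ∀ t, V M (NN M) t = U M t := fun t => V_eq_U_of_rank_le M (rank_le_NN M t)
    have : U M s ≤ V M (NN M + 1) s := U_le_V M _ s
    rw [V_succ] at this
    exact le_trans this (opG_mono M (fun t => (hV t).le) s)
  exact le_antisymm h1 h2

lemma rank_pos {s : S} (h : U M s < ⊤) : 1 ≤ rank M s := by
  rcases Nat.eq_zero_or_pos (rank M s) with h0 | h0
  · exfalso
    have := V_rank M s
    rw [h0, V_zero] at this
    exact absurd this.symm (ne_of_lt h)
  · exact h0

lemma succ_nonempty (s : S) (a : A) : ∃ t, t ∈ M.Succ s a := by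
  by_contra hno
  push_neg at hno
  have hz : (∑ t, M.Δ s a t) = 0 := by
    refine Finset.sum_eq_zero fun t _ => ?_
    have := hno t
    simp only [CMDP.Succ, Set.mem_setOf_eq, not_lt] at this
    exact le_antisymm this zero_le
  rw [M.Δ_sum s a] at hz
  exact one_ne_zero hz

lemma keyStep (s : S) (h : U M s < ⊤) : ∃ a : A,
    ((M.C s a : ℕ∞) + ⨆ t ∈ M.Succ s a, M.strunc (U M) t ≤ U M s) ∧
    ∀ t ∈ M.Succ s a, t ∉ M.R →
      U M t < ⊤ ∧ U M t ≤ U M s ∧ V M (rank M s - 1) t ≤ U M s := by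
  set n := rank M s with hn
  have hn1 : 1 ≤ n := rank_pos M h
  have hVn : V M n s = U M s := V_rank M s
  have hform : V M n s = ⨅ a : A, ((M.C s a : ℕ∞) + ⨆ t ∈ M.Succ s a, M.strunc (V M (n - 1)) t) := by
    conv_lhs => rw [show n = (n - 1) + 1 by omega, V_succ]
    rfl
  have hA : Nonempty A := by
    by_contra hA
    rw [not_nonempty_iff] at hA
    rw [hform, iInf_of_empty] at hVn
    exact absurd hVn.symm (ne_of_lt h)
  obtain ⟨a, ha⟩ := enat_iInf_attained
    (fun a : A => (M.C s a : ℕ∞) + ⨆ t ∈ M.Succ s a, M.strunc (V M (n - 1)) t)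
  rw [← hform, hVn] at ha
  refine ⟨a, ?_, ?_⟩
  · refine le_trans ?_ ha.le
    refine add_le_add_right (iSup₂_mono fun t _ => ?_) _
    exact strunc_mono M (fun u => U_le_V M (n - 1) u) t
  · intro t ht htR
    have h1 : (M.C s a : ℕ∞) + M.strunc (V M (n - 1)) t ≤ U M s := by
      refine le_trans (add_le_add_right ?_ _) ha.le
      exact le_iSup₂ (f := fun t _ => M.strunc (V M (n - 1)) t) t ht
    have hst : M.strunc (V M (n - 1)) t = V M (n - 1) t := by
      unfold CMDP.strunc; rw [if_neg htR]
    rw [hst] at h1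
    have h2 : V M (n - 1) t ≤ U M s := le_trans le_add_self h1
    have h3 : U M t ≤ U M s := le_trans (U_le_V M (n - 1) t) h2
    exact ⟨lt_of_le_of_lt h3 h, h3, h2⟩

/-- The lexicographic potential. -/
def mu (s : S) : ℕ := (U M s).toNat * (NN M + 1) + rank M s

lemma mu_lt {s t : S} (hs : U M s < ⊤) (h1 : U M t ≤ U M s)
    (h2 : V M (rank M s - 1) t ≤ U M s) : mu M t < mu M s := by
  have hts : U M t < ⊤ := lt_of_le_of_lt h1 hs
  rcases lt_or_eq_of_le h1 with hlt | heq
  · have htl : (U M t).toNat < (U M s).toNat := by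
      have e1 : ((U M t).toNat : ℕ∞) = U M t := ENat.coe_toNat hts.ne
      have e2 : ((U M s).toNat : ℕ∞) = U M s := ENat.coe_toNat hs.ne
      rw [← e1, ← e2] at hlt
      exact_mod_cast hlt
    have e1 : mu M t < ((U M t).toNat + 1) * (NN M + 1) := by
      unfold mu
      rw [Nat.succ_mul]
      have := rank_le_NN M t
      omega
    have e2 : ((U M t).toNat + 1) * (NN M + 1) ≤ (U M s).toNat * (NN M + 1) :=
      Nat.mul_le_mul_right _ htl
    exact lt_of_lt_of_le e1 (le_trans e2 (Nat.le_add_right _ _))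
  · have hVt : V M (rank M s - 1) t = U M t := le_antisymm (heq ▸ h2) (U_le_V M _ t)
    have hrt : rank M t ≤ rank M s - 1 := Nat.find_min' (exists_rank M t) hVt
    have hr1 : 1 ≤ rank M s := rank_pos M hs
    unfold mu
    rw [heq]
    omega

lemma R_nonempty (h : ∃ s : S, U M s < ⊤) : ∃ r, r ∈ M.R := by
  classical
  obtain ⟨s0, hs0⟩ := h
  have hne : (Finset.univ.filter (fun t : S => U M t < ⊤)).Nonempty :=
    ⟨s0, by simp [hs0]⟩
  obtain ⟨b, hb, hbmin⟩ := Finset.exists_min_image _ (mu M) hne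
  have hbfin : U M b < ⊤ := by simpa using hb
  obtain ⟨a, hk1, hk2⟩ := keyStep M b hbfin
  obtain ⟨t, ht⟩ := succ_nonempty M b a
  by_cases htR : t ∈ M.R
  · exact ⟨t, htR⟩
  · obtain ⟨htf, hle, hV⟩ := hk2 t ht htR
    have := hbmin t (by simp [htf])
    exact absurd (mu_lt M hbfin hle hV) (not_lt.2 this)

lemma rank_le_aux : ∀ (k : ℕ) (s : S), mu M s ≤ k → U M s < ⊤ →
    rank M s ≤ 1 + (Finset.univ.filter
      (fun t : S => t ∉ M.R ∧ U M t < ⊤ ∧ mu M t < mu M s)).card := by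
  intro k
  induction k using Nat.strong_induction_on with
  | _ k IH =>
    intro s hk hfin
    obtain ⟨a, hk1, hk2⟩ := keyStep M s hfin
    classical
    set As := Finset.univ.filter
      (fun t : S => t ∉ M.R ∧ U M t < ⊤ ∧ mu M t < mu M s) with hAs
    set D := Finset.univ.filter (fun t : S => t ∈ M.Succ s a ∧ t ∉ M.R) with hD
    set m := D.sup (rank M) with hm
    -- every element of D has rank ≤ As.card
    have hDrank : ∀ t ∈ D, rank M t ≤ As.card := by
      intro t htD
      rw [hD, Finset.mem_filter] at htD
      obtain ⟨-, htS, htR⟩ := htD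
      obtain ⟨htf, hle, hV⟩ := hk2 t htS htR
      have hmu : mu M t < mu M s := mu_lt M hfin hle hV
      have htA : t ∈ As := by rw [hAs]; simp [htR, htf, hmu]
      have hcardpos : 1 ≤ As.card := Finset.card_pos.2 ⟨t, htA⟩
      have hsub : (Finset.univ.filter
          (fun u : S => u ∉ M.R ∧ U M u < ⊤ ∧ mu M u < mu M t)) ⊆ As.erase t := by
        intro u hu
        rw [Finset.mem_filter] at hu
        obtain ⟨-, huR, huf, humu⟩ := hu
        refine Finset.mem_erase.2 ⟨?_, ?_⟩
        · rintro rfl; omega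
        · rw [hAs]; simp [huR, huf]; omega
      have hct := Finset.card_le_card hsub
      rw [Finset.card_erase_of_mem htA] at hct
      have := IH (mu M t) (by omega) t le_rfl htf
      omega
    have hmle : m ≤ As.card := Finset.sup_le hDrank
    -- V (m+1) s ≤ U s
    have hstep : V M (m + 1) s ≤ U M s := by
      rw [V_succ]
      have h1 : M.opG (V M m) s ≤
          (M.C s a : ℕ∞) + ⨆ t ∈ M.Succ s a, M.strunc (V M m) t := iInf_le _ a
      refine le_trans h1 (le_trans (add_le_add_right ?_ _) hk1)
      refine iSup₂_mono fun t htS => ?_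
      by_cases htR : t ∈ M.R
      · unfold CMDP.strunc; rw [if_pos htR, if_pos htR]
      · have htD : t ∈ D := by rw [hD]; simp [htS, htR]
        have : V M m t = U M t :=
          V_eq_U_of_rank_le M (Finset.le_sup (f := rank M) htD)
        unfold CMDP.strunc; rw [if_neg htR, if_neg htR, this]
    have heq : V M (m + 1) s = U M s := le_antisymm hstep (U_le_V M _ s)
    have hr : rank M s ≤ m + 1 := Nat.find_min' (exists_rank M s) heq
    omega

lemma rank_le_card (s : S) (h : U M s < ⊤) : rank M s ≤ Fintype.card S := by
  classical
  obtain ⟨r, hr⟩ := R_nonempty M ⟨s, h⟩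
  have hb := rank_le_aux M (mu M s) s le_rfl h
  have hsub : (Finset.univ.filter
      (fun t : S => t ∉ M.R ∧ U M t < ⊤ ∧ mu M t < mu M s)) ⊆ Finset.univ.erase r := by
    intro u hu
    rw [Finset.mem_filter] at hu
    exact Finset.mem_erase.2 ⟨fun huv => hu.2.1 (huv ▸ hr), Finset.mem_univ u⟩
  have hcard := Finset.card_le_card hsub
  rw [Finset.card_erase_of_mem (Finset.mem_univ r), Finset.card_univ] at hcard
  have hpos : 1 ≤ Fintype.card S := Fintype.card_pos_iff.2 ⟨s⟩
  omega

/-! ### Path bookkeeping lemmas -/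

lemma lastState_append_single (l : List (A × S)) (s : S) (a : A) (t : S) :
    lastState s (l ++ [(a, t)]) = t := by
  induction l generalizing s with
  | nil => rfl
  | cons hd tl ih => obtain ⟨a', t'⟩ := hd; simpa [CMDP.lastState] using ih t'

lemma consAux_append_single (l : List (A × S)) (s : S) (a : A) (t : S) :
    M.consAux s (l ++ [(a, t)]) = M.consAux s l + M.C (lastState s l) a := by
  induction l generalizing s with
  | nil => simp [CMDP.consAux, CMDP.lastState]
  | cons hd tl ih =>
      obtain ⟨a', t'⟩ := hd
      show M.C s a' + M.consAux t' (tl ++ [(a, t)]) =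
        M.C s a' + M.consAux t' tl + M.C (lastState t' tl) a
      rw [ih t']
      omega

lemma prefixSteps_zero (ρ : ℕ → S × A) : CMDP.prefixSteps ρ 0 = ([] : List (A × S)) := by
  simp [CMDP.prefixSteps]

lemma prefixSteps_succ (ρ : ℕ → S × A) (i : ℕ) :
    CMDP.prefixSteps ρ (i + 1) = CMDP.prefixSteps ρ i ++ [((ρ i).2, (ρ (i + 1)).1)] := by
  simp [CMDP.prefixSteps, List.range_succ]

lemma lastState_prefixSteps (ρ : ℕ → S × A) (i : ℕ) :
    lastState (runState ρ 0) (CMDP.prefixSteps ρ i) = runState ρ i := by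
  cases i with
  | zero => rw [prefixSteps_zero]; rfl
  | succ i => rw [prefixSteps_succ, lastState_append_single]; rfl

lemma consAux_prefix_succ (ρ : ℕ → S × A) (i : ℕ) :
    M.consAux (runState ρ 0) (CMDP.prefixSteps ρ (i + 1)) =
      M.consAux (runState ρ 0) (CMDP.prefixSteps ρ i) + M.C (runState ρ i) ((ρ i).2) := by
  rw [prefixSteps_succ, consAux_append_single, lastState_prefixSteps]

lemma consAux_prefix_zero (ρ : ℕ → S × A) :
    M.consAux (runState ρ 0) (CMDP.prefixSteps ρ 0) = 0 := by
  rw [prefixSteps_zero]; rfl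

/-! ### The adversary lower bound -/

lemma U_le_value (σ : Strat S A) (s : S) :
    U M s ≤ ⨆ ρ ∈ {ρ | M.CompatFrom σ s ρ}, M.reachCostPlus M.R ρ := by
  classical
  have pick : ∀ (u : S) (a : A), ∃ t, t ∈ M.Succ u a ∧
      ∀ t' ∈ M.Succ u a, M.strunc (U M) t' ≤ M.strunc (U M) t := by
    intro u a
    obtain ⟨t0, ht0⟩ := succ_nonempty M u a
    obtain ⟨b, hb, hmax⟩ := (Finset.univ.filter (fun t : S => t ∈ M.Succ u a)).exists_max_image
      (M.strunc (U M)) ⟨t0, by simp [ht0]⟩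
    exact ⟨b, by simpa using hb, fun t' ht' => hmax t' (by simp [ht'])⟩
  choose pk pk_mem pk_max using pick
  let l : ℕ → List (A × S) := fun n =>
    Nat.rec [] (fun _ lj => lj ++ [(σ (s, lj), pk (lastState s lj) (σ (s, lj)))]) n
  have l_succ : ∀ j, l (j + 1) = l j ++ [(σ (s, l j), pk (lastState s (l j)) (σ (s, l j)))] :=
    fun j => rfl
  set ρ : ℕ → S × A := fun j => (lastState s (l j), σ (s, l j)) with hρ
  have hl0 : l 0 = [] := rfl
  have hrs : ∀ j, runState ρ j = lastState s (l j) := fun j => rfl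
  have hrs0 : runState ρ 0 = s := rfl
  have hlast : ∀ j, lastState s (l (j + 1)) = pk (lastState s (l j)) (σ (s, l j)) := by
    intro j; rw [l_succ, lastState_append_single]
  have hrun : M.IsRun ρ := by
    intro i
    show lastState s (l (i + 1)) ∈ M.Succ (lastState s (l i)) (σ (s, l i))
    rw [hlast i]
    exact pk_mem _ _
  have hpre : ∀ j, CMDP.prefixSteps ρ j = l j := by
    intro j
    induction j with
    | zero => rw [prefixSteps_zero]; rfl
    | succ j ih =>
        rw [prefixSteps_succ, ih, l_succ]
        congr 1
        show [(σ (s, l j), lastState s (l (j + 1)))] = _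
        rw [hlast j]
  have hcompat : M.CompatFrom σ s ρ := by
    refine ⟨⟨hrun, fun i => ?_⟩, hrs0⟩
    show σ (s, l i) = σ (runState ρ 0, CMDP.prefixSteps ρ i)
    rw [hrs0, hpre i]
  refine le_trans ?_ (le_iSup₂ (f := fun ρ _ => M.reachCostPlus M.R ρ) ρ hcompat)
  -- the invariant
  have inv : ∀ j, U M s ≤
      (M.consAux (runState ρ 0) (CMDP.prefixSteps ρ (j + 1)) : ℕ∞) +
        M.strunc (U M) (runState ρ (j + 1)) := by
    intro j
    induction j with
    | zero =>
        have h1 : U M s ≤ (M.C s (σ (s, [])) : ℕ∞) + M.strunc (U M) (runState ρ 1) := by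
          conv_lhs => rw [← congrFun (opG_U M) s]
          refine le_trans (iInf_le _ (σ (s, []))) (add_le_add_right ?_ _)
          refine iSup₂_le fun t ht => ?_
          have := pk_max s (σ (s, [])) t ht
          refine le_trans this ?_
          exact le_of_eq (congrArg (M.strunc (U M)) (hlast 0).symm)
        rw [consAux_prefix_succ, consAux_prefix_zero]
        have h1' : U M s ≤ (M.C s ((ρ 0).2) : ℕ∞) + M.strunc (U M) (runState ρ 1) := h1
        simpa [hrs0, hl0] using h1'
    | succ j ih =>
        by_cases hR : runState ρ (j + 1) ∈ M.R
        · have h0 : M.strunc (U M) (runState ρ (j + 1)) = 0 := by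
            unfold CMDP.strunc; rw [if_pos hR]
          rw [h0, add_zero] at ih
          have hmono : M.consAux (runState ρ 0) (CMDP.prefixSteps ρ (j + 1)) ≤
              M.consAux (runState ρ 0) (CMDP.prefixSteps ρ (j + 1 + 1)) := by
            rw [consAux_prefix_succ M ρ (j + 1)]
            omega
          calc U M s ≤ (M.consAux (runState ρ 0) (CMDP.prefixSteps ρ (j + 1)) : ℕ∞) := ih
          _ ≤ (M.consAux (runState ρ 0) (CMDP.prefixSteps ρ (j + 1 + 1)) : ℕ∞) := by
              exact_mod_cast hmono
          _ ≤ _ + M.strunc (U M) (runState ρ (j + 1 + 1)) := le_self_add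
        · have h0 : M.strunc (U M) (runState ρ (j + 1)) = U M (runState ρ (j + 1)) := by
            unfold CMDP.strunc; rw [if_neg hR]
          have h1 : U M (runState ρ (j + 1)) ≤
              (M.C (runState ρ (j + 1)) ((ρ (j + 1)).2) : ℕ∞) +
                M.strunc (U M) (runState ρ (j + 2)) := by
            conv_lhs => rw [← congrFun (opG_U M) (runState ρ (j + 1))]
            refine le_trans (iInf_le _ ((ρ (j + 1)).2)) (add_le_add_right ?_ _)
            refine iSup₂_le fun t ht => ?_
            refine le_trans (pk_max _ _ t ht) ?_
            exact le_of_eq (congrArg (M.strunc (U M)) (hlast (j + 1)).symm)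
          rw [h0] at ih
          refine le_trans ih ?_
          rw [consAux_prefix_succ (i := j + 1)]
          push_cast
          rw [add_assoc]
          exact add_le_add_right h1 _
  unfold CMDP.reachCostPlus
  refine le_iInf₂ fun i hi => ?_
  obtain ⟨hi1, hiR⟩ := hi
  obtain ⟨j, rfl⟩ : ∃ j, i = j + 1 := ⟨i - 1, by omega⟩
  have h0 : M.strunc (U M) (runState ρ (j + 1)) = 0 := by
    unfold CMDP.strunc; rw [if_pos hiR]
  have := inv j
  rw [h0, add_zero] at this
  exact this

/-! ### The strategy upper bound -/

lemma value_le_U (s : S) (h : U M s < ⊤) :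
    ∃ σ : Strat S A, ∀ ρ, M.CompatFrom σ s ρ → M.reachCostPlus M.R ρ ≤ U M s := by
  classical
  have hA : Nonempty A := by
    obtain ⟨a, -⟩ := keyStep M s h; exact ⟨a⟩
  choose act k1 k2 using keyStep M
  refine ⟨fun hst =>
    if hh : U M (lastState hst.1 hst.2) < ⊤ then act _ hh else Classical.arbitrary A,
    fun ρ hρ => ?_⟩
  obtain ⟨⟨hrun, hact⟩, h0⟩ := hρ
  have hstate_act : ∀ j (hj : U M (runState ρ j) < ⊤), (ρ j).2 = act (runState ρ j) hj := by
    intro j hj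
    rw [hact j]
    dsimp only
    rw [lastState_prefixSteps ρ j]
    exact dif_pos hj
  have step : ∀ j (hj : U M (runState ρ j) < ⊤),
      ((M.C (runState ρ j) ((ρ j).2) : ℕ∞) + M.strunc (U M) (runState ρ (j + 1)) ≤
        U M (runState ρ j)) ∧
      (runState ρ (j + 1) ∉ M.R →
        U M (runState ρ (j + 1)) < ⊤ ∧ mu M (runState ρ (j + 1)) < mu M (runState ρ j)) := by
    intro j hj
    have hsucc : runState ρ (j + 1) ∈ M.Succ (runState ρ j) ((ρ j).2) := hrun j
    rw [hstate_act j hj] at hsucc ⊢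
    constructor
    · refine le_trans (add_le_add_right ?_ _) (k1 _ hj)
      exact le_iSup₂ (f := fun t _ => M.strunc (U M) t) _ hsucc
    · intro hR
      obtain ⟨hf, hle, hV⟩ := k2 _ hj _ hsucc hR
      exact ⟨hf, mu_lt M hj hle hV⟩
  -- there is a hit
  have hex : ∃ i, 1 ≤ i ∧ runState ρ i ∈ M.R := by
    by_contra hno
    push_neg at hno
    have inv : ∀ j, (M.consAux (runState ρ 0) (CMDP.prefixSteps ρ j) : ℕ∞) +
        U M (runState ρ j) ≤ U M s := by
      intro j
      induction j with
      | zero => rw [consAux_prefix_zero, h0]; simp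
      | succ j ih =>
          have hj : U M (runState ρ j) < ⊤ :=
            lt_of_le_of_lt (le_trans le_add_self ih) h
          have hR : runState ρ (j + 1) ∉ M.R := hno (j + 1) (by omega)
          have hstep := (step j hj).1
          have hU : M.strunc (U M) (runState ρ (j + 1)) = U M (runState ρ (j + 1)) := by
            unfold CMDP.strunc; rw [if_neg hR]
          rw [hU] at hstep
          rw [consAux_prefix_succ]
          push_cast
          rw [add_assoc]
          exact le_trans (add_le_add_right hstep _) ih
    have hfin : ∀ j, U M (runState ρ j) < ⊤ := fun j =>
      lt_of_le_of_lt (le_trans le_add_self (inv j)) h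
    have hdec : ∀ j, mu M (runState ρ (j + 1)) < mu M (runState ρ j) := fun j =>
      ((step j (hfin j)).2 (hno (j + 1) (by omega))).2
    have hmono : ∀ j, mu M (runState ρ j) + j ≤ mu M (runState ρ 0) := by
      intro j
      induction j with
      | zero => omega
      | succ j ih => have := hdec j; omega
    have := hmono (mu M (runState ρ 0) + 1)
    omega
  set i0 := Nat.find hex with hi0
  obtain ⟨hi1, hiR⟩ := Nat.find_spec hex
  have inv2 : ∀ j, j < i0 → (M.consAux (runState ρ 0) (CMDP.prefixSteps ρ j) : ℕ∞) +
      U M (runState ρ j) ≤ U M s := by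
    intro j
    induction j with
    | zero => intro _; rw [consAux_prefix_zero, h0]; simp
    | succ j ih =>
        intro hji
        have ihj := ih (by omega)
        have hj : U M (runState ρ j) < ⊤ :=
          lt_of_le_of_lt (le_trans le_add_self ihj) h
        have hR : runState ρ (j + 1) ∉ M.R := by
          have := Nat.find_min hex (show j + 1 < i0 from hji)
          intro hmem
          exact this ⟨by omega, hmem⟩
        have hstep := (step j hj).1
        have hU : M.strunc (U M) (runState ρ (j + 1)) = U M (runState ρ (j + 1)) := by
          unfold CMDP.strunc; rw [if_neg hR]
        rw [hU] at hstep
        rw [consAux_prefix_succ]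
        push_cast
        rw [add_assoc]
        exact le_trans (add_le_add_right hstep _) ihj
  have hj0 : i0 - 1 < i0 := by omega
  have hinv := inv2 (i0 - 1) hj0
  have hjfin : U M (runState ρ (i0 - 1)) < ⊤ :=
    lt_of_le_of_lt (le_trans le_add_self hinv) h
  have hstep := (step (i0 - 1) hjfin).1
  have hi0eq : i0 - 1 + 1 = i0 := by omega
  rw [hi0eq] at hstep
  have hU0 : M.strunc (U M) (runState ρ i0) = 0 := by
    unfold CMDP.strunc; rw [if_pos hiR]
  rw [hU0, add_zero] at hstep
  have hcons : (M.consAux (runState ρ 0) (CMDP.prefixSteps ρ i0) : ℕ∞) ≤ U M s := by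
    conv_lhs => rw [← hi0eq]
    rw [consAux_prefix_succ]
    push_cast
    exact le_trans (add_le_add_right hstep _) hinv
  unfold CMDP.reachCostPlus
  refine le_trans (iInf₂_le (f := fun i _ =>
    (M.consAux (runState ρ 0) (CMDP.prefixSteps ρ i) : ℕ∞)) i0 ⟨hi1, hiR⟩) hcons

lemma V_card_eq_U (s : S) : V M (Fintype.card S) s = U M s := by
  by_cases h : U M s < ⊤
  · exact V_eq_U_of_rank_le M (rank_le_card M s h)
  · have htop : U M s = ⊤ := by rwa [not_lt, top_le_iff] at h
    have h1 : V M (Fintype.card S) s = ⊤ :=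
      top_le_iff.mp (htop ▸ U_le_V M (Fintype.card S) s)
    rw [h1, htop]

lemma minReachPlus_eq_U (s : S) : M.minReachPlus M.R s = U M s := by
  have hge : U M s ≤ M.minReachPlus M.R s := by
    unfold CMDP.minReachPlus
    exact le_iInf fun σ => U_le_value M σ s
  by_cases h : U M s < ⊤
  · obtain ⟨σ, hσ⟩ := value_le_U M s h
    refine le_antisymm ?_ hge
    unfold CMDP.minReachPlus
    exact le_trans (iInf_le _ σ) (iSup₂_le fun ρ hρ => hσ ρ hρ)
  · have htop : U M s = ⊤ := by rwa [not_lt, top_le_iff] at h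
    exact le_antisymm (htop ▸ le_top) hge

end CMDPAux


open CMDP in
/-- Iterating `G` reaches a fixed point within `|S|` steps, and the fixed point is
`MinInitCons = MinReach⁺ to the reload states`. -/
theorem opG_fixed_point_eq_minInitCons {S A : Type} [Fintype S] (M : CMDP S A) :
    ((M.opG)^[Fintype.card S + 1] (⊤ : S → ℕ∞) =
        (M.opG)^[Fintype.card S] (⊤ : S → ℕ∞)) ∧
      ∀ s : S, (M.opG)^[Fintype.card S] (⊤ : S → ℕ∞) s = M.minReachPlus M.R s := by
  refine ⟨?_, fun s => ?_⟩
  · funext s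
    have h1 : CMDPAux.V M (Fintype.card S) s = CMDPAux.U M s := CMDPAux.V_card_eq_U M s
    have h2 : CMDPAux.V M (Fintype.card S + 1) s = CMDPAux.U M s := by
      refine le_antisymm ?_ (CMDPAux.U_le_V M _ s)
      exact le_trans (CMDPAux.V_succ_le M _ s) h1.le
    exact h2.trans h1.symm
  · exact (CMDPAux.V_card_eq_U M s).trans (CMDPAux.minReachPlus_eq_U M s).symm
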